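/- Let S1, S2, P' = x_1,…,x_{p'}, Q' = y_1,…,y_{q'} be as in the stated setting, and let i < p' and 1 < j ≤ q' be indices such that the pair (x_i, Q[1,j−1]) is nonintersecting. Then rr(S1^{x_i}, S2^{y_1}) = max{ rr(S1^{x_i}, S2^{y_j}), rr(S1^{x_{i+1}}, S2^{y_1}), mm(X_i, y_j) + max_{j' ∈ [1,j−1]} mm(x_{i+1}, Y_{j'}) }. -/

import Mathlib

/-- A leaf-labeled rooted tree: either a labeled leaf, or an internal
vertex with a list of subtrees. -/
inductive ETree (L : Type) : Type where
  | leaf : L → ETree L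
  | node : List (ETree L) → ETree L

namespace ETree

variable {L : Type} [DecidableEq L]

/-- The list of leaf labels of a tree. -/
def labelList : ETree L → List L
  | leaf a => [a]
  | node ts => ts.attach.flatMap fun ⟨t, _⟩ => labelList t

/-- The label set of a tree: the set of its leaf labels. -/
def labelSet (t : ETree L) : Finset L := (labelList t).toFinset

/-- The list of children (as subtrees) of the root of a tree. -/
def children : ETree L → List (ETree L)
  | leaf _ => []
  | node ts => ts

/-- A rooted tree is homeomorphic if every internal vertex has at least two children. -/
inductive Homeo : ETree L → Prop where
  | leaf (a : L) : Homeo (leaf a)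
  | node (ts : List (ETree L)) (hlen : 2 ≤ ts.length) (h : ∀ t ∈ ts, Homeo t) :
      Homeo (node ts)

/-- An evolutionary tree: a homeomorphic rooted tree whose leaves carry distinct labels. -/
def IsEvolutionary (t : ETree L) : Prop := Homeo t ∧ (labelList t).Nodup

/-- `restrict t s` is the homeomorphic version `t‖s` of the tree obtained from `t` by
deleting all leaves with labels outside `s` (contracting away all vertices that are
not leaves or lowest common ancestors of two leaves); `none` if nothing remains. -/
def restrict : ETree L → Finset L → Option (ETree L)
  | leaf a, s => if a ∈ s then some (leaf a) else none
  | node ts, s =>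
      match ts.attach.filterMap (fun ⟨t, _⟩ => restrict t s) with
      | [] => none
      | [u] => some u
      | us => some (node us)

/-- Label-preserving isomorphism of leaf-labeled rooted trees. -/
inductive Iso : ETree L → ETree L → Prop where
  | leaf (a : L) : Iso (leaf a) (leaf a)
  | node (ts us : List (ETree L)) (e : Fin ts.length ≃ Fin us.length)
      (h : ∀ i : Fin ts.length, Iso (ts.get i) (us.get (e i))) :
      Iso (node ts) (node us)

/-- Isomorphism of possibly-empty trees. -/
def IsoO : Option (ETree L) → Option (ETree L) → Prop
  | none, none => True
  | some t, some u => Iso t u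
  | _, _ => False

/-- `rr T₁ T₂`: the number of leaves in a maximum agreement subtree of `T₁` and `T₂`,
i.e. the maximum cardinality of a subset `s` of the common labels such that `T₁‖s`
and `T₂‖s` are label-preservingly isomorphic. -/
noncomputable def rr (t₁ t₂ : ETree L) : ℕ :=
  sSup {k | ∃ s : Finset L, s ⊆ labelSet t₁ ∩ labelSet t₂ ∧ s.card = k ∧
    IsoO (restrict t₁ s) (restrict t₂ s)}

end ETree

namespace ETree

variable {L : Type} [DecidableEq L]

noncomputable instance : DecidableEq (ETree L) := Classical.decEq _

/-- `mm U V`: the maximum weight of a matching of the complete bipartite graph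
`(U, V, U×V)` in which the edge `(u,v)` has weight `rr u v` (note that in our
representation a vertex of a tree is identified with the subtree it roots, so the
weight of `(u,v)` is `rr` of the two rooted subtrees). -/
noncomputable def mm (U V : Finset (ETree L)) : ℕ :=
  sSup {w | ∃ M : Finset (ETree L × ETree L),
    (∀ p ∈ M, p.1 ∈ U ∧ p.2 ∈ V) ∧
    (∀ p ∈ M, ∀ q ∈ M, p ≠ q → p.1 ≠ q.1 ∧ p.2 ≠ q.2) ∧
    w = ∑ p ∈ M, rr p.1 p.2}

/-- `mmb U V x y`: the maximum weight of a matching of the complete bipartite graph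
`(U, V, U×V)` (edge `(u,v)` weighted by `rr u v`) that does not use the edge `(x,y)`. -/
noncomputable def mmb (U V : Finset (ETree L)) (x y : ETree L) : ℕ :=
  sSup {w | ∃ M : Finset (ETree L × ETree L),
    (∀ p ∈ M, p.1 ∈ U ∧ p.2 ∈ V) ∧
    (∀ p ∈ M, ∀ q ∈ M, p ≠ q → p.1 ≠ q.1 ∧ p.2 ≠ q.2) ∧
    (x, y) ∉ M ∧
    w = ∑ p ∈ M, rr p.1 p.2}

/-- `IsSubtree s t`: `s` occurs as a rooted subtree `t^u` of `t` (vertices of a tree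
with distinct leaf labels are identified with the subtrees they root). -/
inductive IsSubtree : ETree L → ETree L → Prop where
  | refl (t : ETree L) : IsSubtree t t
  | child {s c : ETree L} {ts : List (ETree L)} (hc : c ∈ ts) (h : IsSubtree s c) :
      IsSubtree s (node ts)

end ETree

/-- A root path `x₁,…,x_len` of a tree: a vertex-simple path starting at the root and
descending, containing no leaf of the tree.  Vertices are identified with the subtrees
they root, so `vert i` is the subtree `S^{xᵢ}` rooted at the `i`-th vertex of the path
(indices run from `1` to `len`). -/
structure RootPath (L : Type) where
  /-- The ambient tree. -/
  tree : ETree L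
  /-- The number of vertices of the path. -/
  len : ℕ
  /-- The subtree rooted at the `i`-th vertex of the path, for `1 ≤ i ≤ len`. -/
  vert : ℕ → ETree L
  len_pos : 1 ≤ len
  first : vert 1 = tree
  /-- The path contains no leaf of the tree. -/
  no_leaf : ∀ i, 1 ≤ i → i ≤ len → ∃ ts, vert i = ETree.node ts
  /-- Each path vertex after the first is a child of the previous one. -/
  step : ∀ i, 1 ≤ i → i < len → vert (i + 1) ∈ (vert i).children

namespace RootPath

variable {L : Type} [DecidableEq L]

/-- `offPath P i` is the set of children of the path vertex `xᵢ` that are not on the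
path (the set `Xᵢ`). -/
noncomputable def offPath (P : RootPath L) (i : ℕ) : Finset (ETree L) :=
  if i < P.len then ((P.vert i).children.toFinset).erase (P.vert (i + 1))
  else (P.vert i).children.toFinset

end RootPath

/-- `Intersecting P Q i j`: the pair `(xᵢ, y_j)` is intersecting, i.e. `S₁^u` and `S₂^v`
share a leaf label for some `u ∈ Xᵢ` and `v ∈ Y_j`. -/
def Intersecting {L : Type} [DecidableEq L] (P Q : RootPath L) (i j : ℕ) : Prop :=
  ∃ u ∈ P.offPath i, ∃ v ∈ Q.offPath j,
    (ETree.labelSet u ∩ ETree.labelSet v).Nonempty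

set_option linter.unusedSectionVars false

namespace ETree

variable {L : Type} [DecidableEq L]

/-- Custom induction principle for nested inductive `ETree`. -/
theorem ind' {motive : ETree L → Prop} (leaf : ∀ a, motive (ETree.leaf a))
    (node : ∀ ts, (∀ t ∈ ts, motive t) → motive (ETree.node ts)) : ∀ t, motive t
  | .leaf a => leaf a
  | .node ts => node ts (fun t ht =>
      have : sizeOf t < sizeOf (ETree.node ts) := by
        have := List.sizeOf_lt_of_mem ht
        simp only [ETree.node.sizeOf_spec]; omega
      ind' leaf node t)
termination_by t => sizeOf t

theorem attach_filterMap {α β : Type*} (l : List α) (f : α → Option β) :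
    l.attach.filterMap (fun x => f x.1) = l.filterMap f := by
  induction l with
  | nil => rfl
  | cons a l ih => simp [List.attach_cons, List.filterMap_map, Function.comp_def, ih,
      List.filterMap_cons]

theorem attach_flatMap {α β : Type*} (l : List α) (f : α → List β) :
    l.attach.flatMap (fun x => f x.1) = l.flatMap f := by
  induction l with
  | nil => rfl
  | cons a l ih => simp [List.attach_cons, List.flatMap_map, Function.comp_def, ih]

/-- `nodeOf l` : the tree formed from a list of children, with contraction. -/
def nodeOf : List (ETree L) → Option (ETree L)
  | [] => none
  | [u] => some u
  | us => some (node us)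

theorem restrict_node (ts : List (ETree L)) (s : Finset L) :
    restrict (node ts) s = nodeOf (ts.filterMap (restrict · s)) := by
  simp only [restrict]
  rw [attach_filterMap ts (fun t => restrict t s)]
  cases h : ts.filterMap (fun t => restrict t s) with
  | nil => rfl
  | cons a l => cases l <;> rfl

theorem labelList_node (ts : List (ETree L)) :
    labelList (node ts) = ts.flatMap labelList := by
  simp only [labelList]
  exact attach_flatMap ts labelList

theorem mem_labelSet_node {a : L} {ts : List (ETree L)} :
    a ∈ labelSet (node ts) ↔ ∃ t ∈ ts, a ∈ labelSet t := by
  simp [labelSet, labelList_node, List.mem_flatMap]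

theorem labelSet_nonempty {t : ETree L} (hh : Homeo t) : (labelSet t).Nonempty := by
  induction t using ind' with
  | leaf a => exact ⟨a, by simp [labelSet, labelList]⟩
  | node ts ih =>
    cases hh with
    | node _ hlen h =>
      obtain ⟨t, ht⟩ : ∃ t, t ∈ ts := by
        cases ts with
        | nil => simp at hlen
        | cons a l => exact ⟨a, List.mem_cons_self⟩
      obtain ⟨a, ha⟩ := ih t ht (h t ht)
      exact ⟨a, mem_labelSet_node.2 ⟨t, ht, ha⟩⟩

theorem labelList_ne_nil {t : ETree L} (hh : Homeo t) : labelList t ≠ [] := by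
  obtain ⟨a, ha⟩ := labelSet_nonempty hh
  intro h
  rw [labelSet, h] at ha
  simp at ha

theorem homeo_child {ts : List (ETree L)} {c : ETree L} (hh : Homeo (node ts)) (hc : c ∈ ts) :
    Homeo c := by cases hh with | node _ _ h => exact h c hc

theorem children_pairwise {ts : List (ETree L)} (hnd : (labelList (node ts)).Nodup) :
    List.Pairwise (fun c d => (labelList c).Disjoint (labelList d)) ts := by
  rw [labelList_node, List.flatMap_def, List.nodup_flatten] at hnd
  exact List.pairwise_map.mp hnd.2

theorem nodup_child {ts : List (ETree L)} {c : ETree L} (hnd : (labelList (node ts)).Nodup)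
    (hc : c ∈ ts) : (labelList c).Nodup := by
  rw [labelList_node, List.flatMap_def, List.nodup_flatten] at hnd
  exact hnd.1 _ (List.mem_map_of_mem (f := labelList) hc)

theorem children_disjoint {ts : List (ETree L)} (hh : Homeo (node ts))
    (hnd : (labelList (node ts)).Nodup) :
    ∀ c ∈ ts, ∀ d ∈ ts, c ≠ d → ∀ a, a ∈ labelSet c → a ∉ labelSet d := by
  have hp := children_pairwise hnd
  have hsym : Symmetric (fun c d : ETree L => (labelList c).Disjoint (labelList d)) :=
    fun c d h => h.symm
  have : Std.Symm (fun c d : ETree L => (labelList c).Disjoint (labelList d)) :=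
    ⟨fun c d h => hsym h⟩
  have := hp.forall
  intro c hc d hd hne a hac had
  exact this hc hd hne (by simpa [labelSet] using hac) (by simpa [labelSet] using had)

theorem children_nodup {ts : List (ETree L)} (hh : Homeo (node ts))
    (hnd : (labelList (node ts)).Nodup) : ts.Nodup := by
  refine (children_pairwise hnd).imp_of_mem ?_
  intro a b ha hb hdis
  intro h; subst h
  exact labelList_ne_nil (homeo_child hh ha)
    (List.eq_nil_iff_forall_not_mem.2 fun x hx => hdis hx hx)

theorem IsSubtree.trans' {a b c : ETree L} (h1 : IsSubtree a b) (h2 : IsSubtree b c) :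
    IsSubtree a c := by
  induction h2 with
  | refl => exact h1
  | child hc _ ih => exact .child hc ih

theorem labelSet_subtree {u t : ETree L} (h : IsSubtree u t) : labelSet u ⊆ labelSet t := by
  induction h with
  | refl => exact Finset.Subset.refl _
  | child hc _ ih => exact fun a ha => mem_labelSet_node.2 ⟨_, hc, ih ha⟩

theorem nodup_subtree {u t : ETree L} (h : IsSubtree u t) (hnd : (labelList t).Nodup) :
    (labelList u).Nodup := by
  induction h with
  | refl => exact hnd
  | child hc _ ih => exact ih (nodup_child hnd hc)

theorem homeo_subtree {u t : ETree L} (h : IsSubtree u t) (hh : Homeo t) : Homeo u := by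
  induction h with
  | refl => exact hh
  | child hc _ ih => exact ih (homeo_child hh hc)

theorem restrict_eq_none_iff (t : ETree L) (s : Finset L) :
    restrict t s = none ↔ ∀ a ∈ labelSet t, a ∉ s := by
  induction t using ind' with
  | leaf a =>
    by_cases h : a ∈ s <;> simp [restrict, labelSet, labelList, h]
  | node ts ih =>
    rw [restrict_node]
    have : nodeOf (ts.filterMap (restrict · s)) = none ↔ ts.filterMap (restrict · s) = [] := by
      cases h : ts.filterMap (restrict · s) with
      | nil => simp [nodeOf]
      | cons a l => cases l <;> simp [nodeOf]
    rw [this, List.filterMap_eq_nil_iff]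
    constructor
    · intro h a ha
      obtain ⟨t, ht, hat⟩ := mem_labelSet_node.1 ha
      exact (ih t ht).1 (h t ht) a hat
    · intro h t ht
      exact (ih t ht).2 fun a hat => h a (mem_labelSet_node.2 ⟨t, ht, hat⟩)

theorem restrict_empty (t : ETree L) : restrict t ∅ = none :=
  (restrict_eq_none_iff t ∅).2 (by simp)

theorem restrict_ne_none {t : ETree L} {s : Finset L} {a : L} (ha : a ∈ labelSet t)
    (has : a ∈ s) : restrict t s ≠ none := by
  intro h
  exact (restrict_eq_none_iff t s).1 h a ha has

theorem labelSet_restrict {t : ETree L} : ∀ {u : ETree L} {s : Finset L},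
    restrict t s = some u → labelSet u = labelSet t ∩ s := by
  induction t using ind' with
  | leaf a =>
    intro u s h
    by_cases has : a ∈ s
    · simp only [restrict, if_pos has, Option.some.injEq] at h
      subst h
      simp [labelSet, labelList, Finset.ext_iff, has]
    · simp [restrict, if_neg has] at h
  | node ts ih =>
    intro u s h
    rw [restrict_node] at h
    have hmem : ∀ a : L, a ∈ labelSet u ↔ ∃ c ∈ ts.filterMap (restrict · s), a ∈ labelSet c := by
      intro a
      rcases hl : ts.filterMap (restrict · s) with _ | ⟨c, l⟩
      · rw [hl] at h; simp [nodeOf] at h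
      · rcases l with _ | ⟨d, l⟩
        · rw [hl] at h; simp only [nodeOf, Option.some.injEq] at h
          subst h
          simp
        · rw [hl] at h; simp only [nodeOf, Option.some.injEq] at h
          subst h
          rw [mem_labelSet_node]
    ext a
    rw [hmem a]
    simp only [List.mem_filterMap, Finset.mem_inter]
    constructor
    · rintro ⟨c, ⟨t, ht, hres⟩, hac⟩
      have := ih t ht hres
      rw [this, Finset.mem_inter] at hac
      exact ⟨mem_labelSet_node.2 ⟨t, ht, hac.1⟩, hac.2⟩
    · rintro ⟨hat, has⟩
      obtain ⟨t, ht, hat'⟩ := mem_labelSet_node.1 hat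
      rcases hres : restrict t s with _ | c
      · exact absurd hres (restrict_ne_none hat' has)
      · refine ⟨c, ⟨t, ht, hres⟩, ?_⟩
        rw [ih t ht hres]
        exact Finset.mem_inter.2 ⟨hat', has⟩

theorem restrict_congr {t : ETree L} : ∀ {s s' : Finset L},
    (∀ a ∈ labelSet t, (a ∈ s ↔ a ∈ s')) → restrict t s = restrict t s' := by
  induction t using ind' with
  | leaf a =>
    intro s s' h
    have : a ∈ labelSet (leaf a) := by simp [labelSet, labelList]
    simp only [restrict]
    by_cases has : a ∈ s
    · rw [if_pos has, if_pos ((h a this).1 has)]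
    · rw [if_neg has, if_neg (fun h' => has ((h a this).2 h'))]
  | node ts ih =>
    intro s s' h
    rw [restrict_node, restrict_node]
    congr 1
    exact List.filterMap_congr fun t ht =>
      ih t ht fun a ha => h a (mem_labelSet_node.2 ⟨t, ht, ha⟩)

theorem filterMap_eq_toList {α β : Type*} {l : List α} {f : α → Option β} {c : α}
    (hc : c ∈ l) (hnd : l.Nodup) (h : ∀ x ∈ l, x ≠ c → f x = none) :
    l.filterMap f = (f c).toList := by
  induction l with
  | nil => simp at hc
  | cons a l ih =>
    rcases List.mem_cons.1 hc with rfl | hc'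
    · have : l.filterMap f = [] := List.filterMap_eq_nil_iff.2 fun x hx =>
        h x (List.mem_cons_of_mem _ hx) (fun he => (List.nodup_cons.1 hnd).1 (he ▸ hx))
      rw [List.filterMap_cons, this]
      cases hfc : f c <;> simp [hfc]
    · have hac : a ≠ c := fun he => (List.nodup_cons.1 hnd).1 (he ▸ hc')
      rw [List.filterMap_cons, h a List.mem_cons_self hac]
      exact ih hc' (List.nodup_cons.1 hnd).2 fun x hx => h x (List.mem_cons_of_mem _ hx)

theorem filterMap_eq_pair {α β : Type*} {l : List α} {f : α → Option β} {c d : α} {u v : β}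
    (hc : c ∈ l) (hd : d ∈ l) (hcd : c ≠ d) (hnd : l.Nodup)
    (h : ∀ x ∈ l, x ≠ c → x ≠ d → f x = none) (hfc : f c = some u) (hfd : f d = some v) :
    l.filterMap f = [u, v] ∨ l.filterMap f = [v, u] := by
  induction l with
  | nil => simp at hc
  | cons a l ih =>
    have hnd' := List.nodup_cons.1 hnd
    rcases List.mem_cons.1 hc with rfl | hc'
    · have hdl : d ∈ l := by
        rcases List.mem_cons.1 hd with rfl | h'
        · exact absurd rfl hcd
        · exact h'
      have : l.filterMap f = (f d).toList := filterMap_eq_toList hdl hnd'.2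
        fun x hx hxd => h x (List.mem_cons_of_mem _ hx)
          (fun he => hnd'.1 (he ▸ hx)) hxd
      left
      rw [List.filterMap_cons, hfc, this, hfd]
      rfl
    · rcases List.mem_cons.1 hd with rfl | hd'
      · have : l.filterMap f = (f c).toList := filterMap_eq_toList hc' hnd'.2
          fun x hx hxc => h x (List.mem_cons_of_mem _ hx) hxc
            (fun he => hnd'.1 (he ▸ hx))
        right
        rw [List.filterMap_cons, hfd, this, hfc]
        rfl
      · have ha : f a = none := h a List.mem_cons_self
          (fun he => hnd'.1 (he ▸ hc')) (fun he => hnd'.1 (he ▸ hd'))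
        rw [List.filterMap_cons, ha]
        exact ih hc' hd' hnd'.2 fun x hx => h x (List.mem_cons_of_mem _ hx)

theorem two_le_length_filterMap {α β : Type*} {l : List α} {f : α → Option β} {c d : α}
    {u v : β} (hc : c ∈ l) (hd : d ∈ l) (hcd : c ≠ d)
    (hfc : f c = some u) (hfd : f d = some v) :
    2 ≤ (l.filterMap f).length := by
  induction l with
  | nil => simp at hc
  | cons a l ih =>
    have one_le : ∀ (x : α) (w : β), x ∈ l → f x = some w → 1 ≤ (l.filterMap f).length := by
      intro x w hx hfx
      have : w ∈ l.filterMap f := List.mem_filterMap.2 ⟨x, hx, hfx⟩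
      exact List.length_pos_iff.2 fun he => by simp [he] at this
    rcases List.mem_cons.1 hc with rfl | hc'
    · have hdl : d ∈ l := (List.mem_cons.1 hd).resolve_left (fun he => hcd he.symm)
      rw [List.filterMap_cons, hfc]
      have := one_le d v hdl hfd
      simp only [List.length_cons]
      omega
    · rcases List.mem_cons.1 hd with rfl | hd'
      · rw [List.filterMap_cons, hfd]
        have := one_le c u hc' hfc
        simp only [List.length_cons]
        omega
      · rw [List.filterMap_cons]
        cases hfa : f a with
        | none => exact ih hc' hd'
        | some w =>
          have := ih hc' hd'
          simp only [List.length_cons]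
          omega

theorem nodeOf_pair {u v : ETree L} : nodeOf [u, v] = some (node [u, v]) := rfl

theorem nodeOf_of_two_le {l : List (ETree L)} (h : 2 ≤ l.length) : nodeOf l = some (node l) := by
  match l with
  | [] => simp at h
  | [u] => simp at h
  | a :: b :: l => rfl

theorem restrict_eq_of_subtree {u t : ETree L} (hsub : IsSubtree u t) :
    ∀ s : Finset L, Homeo t → (labelList t).Nodup →
    (∀ a ∈ s, a ∈ labelSet t → a ∈ labelSet u) →
    restrict t s = restrict u s := by
  induction hsub with
  | refl => intros; rfl
  | @child c ts hc hsubc ih =>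
    intro s hh hnd hs
    rw [restrict_node]
    rw [filterMap_eq_toList hc (children_nodup hh hnd) ?_]
    · rw [ih s (homeo_child hh hc) (nodup_child hnd hc)
        (fun a ha hac => hs a ha (mem_labelSet_node.2 ⟨c, hc, hac⟩))]
      cases restrict u s <;> rfl
    · intro x hx hxc
      rw [restrict_eq_none_iff]
      intro a hax has
      have hau : a ∈ labelSet u := hs a has (mem_labelSet_node.2 ⟨x, hx, hax⟩)
      have hac : a ∈ labelSet c := labelSet_subtree hsubc hau
      exact children_disjoint hh hnd x hx c hc hxc a hax hac

theorem iso_refl : ∀ t : ETree L, Iso t t := by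
  intro t
  induction t using ind' with
  | leaf a => exact .leaf a
  | node ts ih =>
    exact .node ts ts (Equiv.refl _) fun i => ih _ (ts.get_mem i)

theorem iso_symm {t u : ETree L} (h : Iso t u) : Iso u t := by
  induction h with
  | leaf a => exact .leaf a
  | node ts us e _ ih =>
    refine .node us ts e.symm fun i => ?_
    have := ih (e.symm i)
    rwa [Equiv.apply_symm_apply] at this

theorem iso_labelSet {t u : ETree L} (h : Iso t u) : labelSet t = labelSet u := by
  induction h with
  | leaf a => rfl
  | node ts us e _ ih =>
    ext a
    rw [mem_labelSet_node, mem_labelSet_node]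
    constructor
    · rintro ⟨c, hc, hac⟩
      obtain ⟨i, rfl⟩ := List.mem_iff_get.1 hc
      exact ⟨us.get (e i), List.get_mem us _, (ih i) ▸ hac⟩
    · rintro ⟨d, hd, had⟩
      obtain ⟨j, rfl⟩ := List.mem_iff_get.1 hd
      refine ⟨ts.get (e.symm j), List.get_mem ts _, ?_⟩
      have h2 := ih (e.symm j)
      rw [Equiv.apply_symm_apply] at h2
      rw [h2]
      exact had

theorem iso_children {ts us : List (ETree L)} (h : Iso (node ts) (node us)) :
    ∀ c ∈ ts, ∃ d ∈ us, Iso c d := by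
  cases h with
  | node _ _ e hh =>
    intro c hc
    obtain ⟨i, rfl⟩ := List.mem_iff_get.1 hc
    exact ⟨us.get (e i), List.get_mem us _, hh i⟩

theorem iso_pair {a b c d : ETree L} (h1 : Iso a c) (h2 : Iso b d) :
    Iso (node [a, b]) (node [c, d]) := by
  refine .node [a, b] [c, d] (Equiv.refl _) fun i => ?_
  fin_cases i
  · exact h1
  · exact h2

theorem iso_pair_swap {a b c d : ETree L} (h1 : Iso a d) (h2 : Iso b c) :
    Iso (node [a, b]) (node [c, d]) := by
  have hlen : ∀ (x y : ETree L), ([x, y] : List (ETree L)).length = 2 := fun _ _ => rfl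
  refine .node [a, b] [c, d]
    ⟨fun i => ⟨1 - i.1, by have := i.2; simp only [List.length_cons, List.length_nil] at this ⊢; omega⟩,
     fun i => ⟨1 - i.1, by have := i.2; simp only [List.length_cons, List.length_nil] at this ⊢; omega⟩,
     fun i => by ext; have := i.2; simp only [List.length_cons, List.length_nil] at this; simp; omega,
     fun i => by ext; have := i.2; simp only [List.length_cons, List.length_nil] at this; simp; omega⟩ fun i => ?_
  fin_cases i
  · exact h1
  · exact h2

theorem isoO_symm {o o' : Option (ETree L)} (h : IsoO o o') : IsoO o' o := by
  cases o <;> cases o' <;> simp [IsoO] at h ⊢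
  exact iso_symm h

theorem rr_set_nonempty (t u : ETree L) :
    {k | ∃ s : Finset L, s ⊆ labelSet t ∩ labelSet u ∧ s.card = k ∧
      IsoO (restrict t s) (restrict u s)}.Nonempty :=
  ⟨0, ∅, Finset.empty_subset _, Finset.card_empty, by
    rw [restrict_empty, restrict_empty]; trivial⟩

theorem rr_bddAbove (t u : ETree L) :
    BddAbove {k | ∃ s : Finset L, s ⊆ labelSet t ∩ labelSet u ∧ s.card = k ∧
      IsoO (restrict t s) (restrict u s)} := by
  refine ⟨(labelSet t).card, ?_⟩
  rintro k ⟨s, hs, rfl, _⟩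
  exact Finset.card_le_card (hs.trans Finset.inter_subset_left)

theorem card_le_rr {t u : ETree L} {s : Finset L} (hs : s ⊆ labelSet t ∩ labelSet u)
    (hiso : IsoO (restrict t s) (restrict u s)) : s.card ≤ rr t u :=
  le_csSup (rr_bddAbove t u) ⟨s, hs, rfl, hiso⟩

theorem rr_spec (t u : ETree L) : ∃ s : Finset L, s ⊆ labelSet t ∩ labelSet u ∧
    s.card = rr t u ∧ IsoO (restrict t s) (restrict u s) :=
  Nat.sSup_mem (rr_set_nonempty t u) (rr_bddAbove t u)

theorem rr_le_card (t u : ETree L) : rr t u ≤ (labelSet t).card := by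
  refine csSup_le (rr_set_nonempty t u) ?_
  rintro k ⟨s, hs, rfl, _⟩
  exact Finset.card_le_card (hs.trans Finset.inter_subset_left)

theorem rr_comm (t u : ETree L) : rr t u = rr u t := by
  unfold rr
  congr 1
  ext k
  constructor <;> rintro ⟨s, h1, h2, h3⟩ <;>
    exact ⟨s, by rwa [Finset.inter_comm], h2, isoO_symm h3⟩

theorem rr_le_of_subtree_right {t u u' : ETree L} (hh : Homeo u) (hnd : (labelList u).Nodup)
    (hsub : IsSubtree u' u) : rr t u' ≤ rr t u := by
  obtain ⟨s, hs, hc, hiso⟩ := rr_spec t u'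
  rw [← hc]
  refine card_le_rr (fun a ha => ?_) ?_
  · have := hs ha
    rw [Finset.mem_inter] at this ⊢
    exact ⟨this.1, labelSet_subtree hsub this.2⟩
  · rwa [restrict_eq_of_subtree hsub s hh hnd
      (fun a ha _ => ((Finset.mem_inter.1 (hs ha)).2 : a ∈ labelSet u'))]

theorem rr_le_of_subtree_left {t t' u : ETree L} (hh : Homeo t) (hnd : (labelList t).Nodup)
    (hsub : IsSubtree t' t) : rr t' u ≤ rr t u := by
  rw [rr_comm t' u, rr_comm t u]
  exact rr_le_of_subtree_right hh hnd hsub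

theorem mm_set_nonempty (U V : Finset (ETree L)) :
    {w | ∃ M : Finset (ETree L × ETree L),
      (∀ p ∈ M, p.1 ∈ U ∧ p.2 ∈ V) ∧
      (∀ p ∈ M, ∀ q ∈ M, p ≠ q → p.1 ≠ q.1 ∧ p.2 ≠ q.2) ∧
      w = ∑ p ∈ M, rr p.1 p.2}.Nonempty :=
  ⟨0, ∅, by simp, by simp, by simp⟩

theorem mm_bddAbove (U V : Finset (ETree L)) :
    BddAbove {w | ∃ M : Finset (ETree L × ETree L),
      (∀ p ∈ M, p.1 ∈ U ∧ p.2 ∈ V) ∧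
      (∀ p ∈ M, ∀ q ∈ M, p ≠ q → p.1 ≠ q.1 ∧ p.2 ≠ q.2) ∧
      w = ∑ p ∈ M, rr p.1 p.2} := by
  refine ⟨∑ u ∈ U, (labelSet u).card, ?_⟩
  rintro w ⟨M, hM, hmatch, rfl⟩
  calc ∑ p ∈ M, rr p.1 p.2 ≤ ∑ p ∈ M, (labelSet p.1).card :=
        Finset.sum_le_sum fun p _ => rr_le_card p.1 p.2
    _ = ∑ u ∈ M.image Prod.fst, (labelSet u).card := by
        rw [Finset.sum_image]
        intro p hp q hq hpq
        by_contra hne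
        exact (hmatch p hp q hq hne).1 hpq
    _ ≤ ∑ u ∈ U, (labelSet u).card :=
        Finset.sum_le_sum_of_subset (fun u hu => by
          obtain ⟨p, hp, rfl⟩ := Finset.mem_image.1 hu
          exact (hM p hp).1)

theorem rr_le_mm_single {U : Finset (ETree L)} {u y : ETree L} (hu : u ∈ U) :
    rr u y ≤ mm U {y} := by
  refine le_csSup (mm_bddAbove U {y}) ⟨{(u, y)}, ?_, ?_, ?_⟩
  · intro p hp
    rw [Finset.mem_singleton] at hp
    subst hp
    exact ⟨hu, Finset.mem_singleton_self y⟩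
  · intro p hp q hq hne
    rw [Finset.mem_singleton] at hp hq
    exact absurd (hp.trans hq.symm) hne
  · simp

theorem rr_le_mm_single' {V : Finset (ETree L)} {x v : ETree L} (hv : v ∈ V) :
    rr x v ≤ mm {x} V := by
  refine le_csSup (mm_bddAbove {x} V) ⟨{(x, v)}, ?_, ?_, ?_⟩
  · intro p hp
    rw [Finset.mem_singleton] at hp
    subst hp
    exact ⟨Finset.mem_singleton_self x, hv⟩
  · intro p hp q hq hne
    rw [Finset.mem_singleton] at hp hq
    exact absurd (hp.trans hq.symm) hne
  · simp

theorem mm_single_le {U : Finset (ETree L)} {y : ETree L} {X : ℕ}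
    (h : ∀ u ∈ U, rr u y ≤ X) : mm U {y} ≤ X := by
  refine csSup_le (mm_set_nonempty U {y}) ?_
  rintro w ⟨M, hM, hmatch, rfl⟩
  rcases Finset.eq_empty_or_nonempty M with rfl | ⟨p, hp⟩
  · simp
  · have hMp : M = {p} := by
      apply Finset.eq_singleton_iff_unique_mem.2
      refine ⟨hp, fun q hq => ?_⟩
      by_contra hne
      have h2 := (hmatch q hq p hp hne).2
      rw [Finset.mem_singleton.1 (hM q hq).2, Finset.mem_singleton.1 (hM p hp).2] at h2
      exact h2 rfl
    rw [hMp, Finset.sum_singleton]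
    have := Finset.mem_singleton.1 (hM p hp).2
    rw [this]
    exact h p.1 (hM p hp).1

theorem mm_single_le' {V : Finset (ETree L)} {x : ETree L} {X : ℕ}
    (h : ∀ v ∈ V, rr x v ≤ X) : mm {x} V ≤ X := by
  refine csSup_le (mm_set_nonempty {x} V) ?_
  rintro w ⟨M, hM, hmatch, rfl⟩
  rcases Finset.eq_empty_or_nonempty M with rfl | ⟨p, hp⟩
  · simp
  · have hMp : M = {p} := by
      apply Finset.eq_singleton_iff_unique_mem.2
      refine ⟨hp, fun q hq => ?_⟩
      by_contra hne
      have h2 := (hmatch q hq p hp hne).1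
      rw [Finset.mem_singleton.1 (hM q hq).1, Finset.mem_singleton.1 (hM p hp).1] at h2
      exact h2 rfl
    rw [hMp, Finset.sum_singleton]
    have := Finset.mem_singleton.1 (hM p hp).1
    rw [this]
    exact h p.2 (hM p hp).2

theorem children_subtree {t c : ETree L} (hc : c ∈ t.children) : IsSubtree c t := by
  cases t with
  | leaf a => simp [children] at hc
  | node ts => exact .child (by simpa [children] using hc) (.refl c)

end ETree

namespace RootPath

open ETree

variable {L : Type} [DecidableEq L] (P : RootPath L)

theorem vert_subtree {c c' : ℕ} (h1 : 1 ≤ c) (h2 : c ≤ c') (h3 : c' ≤ P.len) :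
    IsSubtree (P.vert c') (P.vert c) := by
  induction c' , h2 using Nat.le_induction with
  | base => exact .refl _
  | succ n hn ih =>
    have hnlen : n < P.len := by omega
    have hstep := P.step n (le_trans h1 hn) hnlen
    exact IsSubtree.trans' (children_subtree hstep) (ih (by omega))

theorem vert_subtree_tree {c : ℕ} (h1 : 1 ≤ c) (h2 : c ≤ P.len) :
    IsSubtree (P.vert c) P.tree := by
  rw [← P.first]
  exact P.vert_subtree le_rfl h1 h2

theorem vert_homeo (hev : IsEvolutionary P.tree) {c : ℕ} (h1 : 1 ≤ c) (h2 : c ≤ P.len) :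
    Homeo (P.vert c) := homeo_subtree (P.vert_subtree_tree h1 h2) hev.1

theorem vert_nodup (hev : IsEvolutionary P.tree) {c : ℕ} (h1 : 1 ≤ c) (h2 : c ≤ P.len) :
    (labelList (P.vert c)).Nodup := nodup_subtree (P.vert_subtree_tree h1 h2) hev.2

theorem mem_offPath_iff {c : ℕ} (hc : c < P.len) {u : ETree L} :
    u ∈ P.offPath c ↔ u ∈ (P.vert c).children ∧ u ≠ P.vert (c + 1) := by
  rw [offPath, if_pos hc, Finset.mem_erase, List.mem_toFinset]
  tauto

theorem offPath_subtree {c : ℕ} (hc : c < P.len) {u : ETree L} (hu : u ∈ P.offPath c) :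
    IsSubtree u (P.vert c) :=
  children_subtree ((P.mem_offPath_iff hc).1 hu).1

/-- Children of a path vertex have pairwise disjoint label sets. -/
theorem children_disjoint_vert (hev : IsEvolutionary P.tree) {c : ℕ} (h1 : 1 ≤ c)
    (h2 : c ≤ P.len) : ∀ u ∈ (P.vert c).children, ∀ w ∈ (P.vert c).children, u ≠ w →
    ∀ a, a ∈ labelSet u → a ∉ labelSet w := by
  obtain ⟨ts, hts⟩ := P.no_leaf c h1 h2
  have hh := P.vert_homeo hev h1 h2
  have hnd := P.vert_nodup hev h1 h2
  rw [hts] at hh hnd ⊢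
  simpa [children] using children_disjoint hh hnd

theorem children_nodup_vert (hev : IsEvolutionary P.tree) {c : ℕ} (h1 : 1 ≤ c)
    (h2 : c ≤ P.len) : (P.vert c).children.Nodup := by
  obtain ⟨ts, hts⟩ := P.no_leaf c h1 h2
  have hh := P.vert_homeo hev h1 h2
  have hnd := P.vert_nodup hev h1 h2
  rw [hts] at hh hnd ⊢
  simpa [children] using children_nodup hh hnd

theorem mem_labelSet_vert_iff (hev : IsEvolutionary P.tree) {c : ℕ} (h1 : 1 ≤ c)
    (h2 : c < P.len) {a : L} :
    a ∈ labelSet (P.vert c) ↔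
      a ∈ labelSet (P.vert (c + 1)) ∨ ∃ u ∈ P.offPath c, a ∈ labelSet u := by
  obtain ⟨ts, hts⟩ := P.no_leaf c h1 (le_of_lt h2)
  have hstep := P.step c h1 h2
  constructor
  · intro ha
    rw [hts, mem_labelSet_node] at ha
    obtain ⟨t, ht, hat⟩ := ha
    have ht' : t ∈ (P.vert c).children := by rw [hts]; simpa [children] using ht
    by_cases he : t = P.vert (c + 1)
    · exact Or.inl (he ▸ hat)
    · exact Or.inr ⟨t, (P.mem_offPath_iff h2).2 ⟨ht', he⟩, hat⟩
  · intro ha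
    rw [hts, mem_labelSet_node]
    rcases ha with ha | ⟨u, hu, hau⟩
    · exact ⟨P.vert (c + 1), by rw [hts] at hstep; simpa [children] using hstep, ha⟩
    · refine ⟨u, ?_, hau⟩
      have := ((P.mem_offPath_iff h2).1 hu).1
      rw [hts] at this
      simpa [children] using this

theorem mem_labelSet_path {c c' : ℕ} (h1 : 1 ≤ c) (h2 : c ≤ c') (h3 : c' ≤ P.len)
    (hev : IsEvolutionary P.tree) {a : L} (ha : a ∈ labelSet (P.vert c)) :
    a ∈ labelSet (P.vert c') ∨ ∃ b, c ≤ b ∧ b < c' ∧ ∃ u ∈ P.offPath b, a ∈ labelSet u := by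
  induction c' , h2 using Nat.le_induction with
  | base => exact Or.inl ha
  | succ n hn ih =>
    rcases ih (by omega) with h | ⟨b, hb1, hb2, hb3⟩
    · rcases (P.mem_labelSet_vert_iff hev (le_trans h1 hn) (by omega)).1 h with h' | ⟨u, hu, hau⟩
      · exact Or.inl h'
      · exact Or.inr ⟨n, hn, by omega, u, hu, hau⟩
    · exact Or.inr ⟨b, hb1, by omega, hb3⟩

end RootPath
open ETree in
theorem rr_recurrence_G' {L : Type} [DecidableEq L] (P Q : RootPath L)
    (hS₁ : ETree.IsEvolutionary P.tree) (hS₂ : ETree.IsEvolutionary Q.tree)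
    (hlab : ETree.labelSet P.tree = ETree.labelSet Q.tree)
    (i j : ℕ) (hi₁ : 1 ≤ i) (hi : i < P.len) (hj₁ : 1 < j) (hj : j ≤ Q.len)
    (hnon : ∀ b, 1 ≤ b → b ≤ j - 1 → ¬ Intersecting P Q i b) :
    rr (P.vert i) (Q.vert 1) =
      max (rr (P.vert i) (Q.vert j))
      (max (rr (P.vert (i + 1)) (Q.vert 1))
           (mm (P.offPath i) {Q.vert j} +
            (Finset.Icc 1 (j - 1)).sup (fun b => mm {P.vert (i + 1)} (Q.offPath b)))) := by
  have hilen : i ≤ P.len := le_of_lt hi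
  have hi1len : i + 1 ≤ P.len := hi
  have hj0 : 1 ≤ j := by omega
  have homx : Homeo (P.vert i) := P.vert_homeo hS₁ hi₁ hilen
  have ndx : (labelList (P.vert i)).Nodup := P.vert_nodup hS₁ hi₁ hilen
  have homx' : Homeo (P.vert (i + 1)) := P.vert_homeo hS₁ (by omega) hi1len
  have ndx' : (labelList (P.vert (i + 1))).Nodup := P.vert_nodup hS₁ (by omega) hi1len
  have homy1 : Homeo (Q.vert 1) := Q.vert_homeo hS₂ le_rfl Q.len_pos
  have ndy1 : (labelList (Q.vert 1)).Nodup := Q.vert_nodup hS₂ le_rfl Q.len_pos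
  have homyj : Homeo (Q.vert j) := Q.vert_homeo hS₂ hj0 hj
  have ndyj : (labelList (Q.vert j)).Nodup := Q.vert_nodup hS₂ hj0 hj
  -- disjointness of off-path children from the next path vertex, P side at level i
  have hdisP : ∀ u ∈ P.offPath i, ∀ a, a ∈ labelSet u → a ∉ labelSet (P.vert (i + 1)) := by
    intro u hu a hau
    exact P.children_disjoint_vert hS₁ hi₁ hilen u ((P.mem_offPath_iff hi).1 hu).1
      (P.vert (i + 1)) (P.step i hi₁ hi) ((P.mem_offPath_iff hi).1 hu).2 a hau
  have hdisPP : ∀ u ∈ P.offPath i, ∀ w ∈ P.offPath i, u ≠ w →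
      ∀ a, a ∈ labelSet u → a ∉ labelSet w := by
    intro u hu w hw hne a hau
    exact P.children_disjoint_vert hS₁ hi₁ hilen u ((P.mem_offPath_iff hi).1 hu).1
      w ((P.mem_offPath_iff hi).1 hw).1 hne a hau
  have hdisQ : ∀ b, 1 ≤ b → b < Q.len → ∀ v ∈ Q.offPath b, ∀ a, a ∈ labelSet v →
      a ∉ labelSet (Q.vert (b + 1)) := by
    intro b hb1 hb2 v hv a hav
    exact Q.children_disjoint_vert hS₂ hb1 (le_of_lt hb2) v ((Q.mem_offPath_iff hb2).1 hv).1
      (Q.vert (b + 1)) (Q.step b hb1 hb2) ((Q.mem_offPath_iff hb2).1 hv).2 a hav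
  have hdisQQ : ∀ b, 1 ≤ b → b < Q.len → ∀ v ∈ Q.offPath b, ∀ w ∈ Q.offPath b, v ≠ w →
      ∀ a, a ∈ labelSet v → a ∉ labelSet w := by
    intro b hb1 hb2 v hv w hw hne a hav
    exact Q.children_disjoint_vert hS₂ hb1 (le_of_lt hb2) v ((Q.mem_offPath_iff hb2).1 hv).1
      w ((Q.mem_offPath_iff hb2).1 hw).1 hne a hav
  -- label subsets
  have hsubx' : labelSet (P.vert (i + 1)) ⊆ labelSet (P.vert i) :=
    labelSet_subtree (children_subtree (P.step i hi₁ hi))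
  have hsubXx : ∀ u ∈ P.offPath i, labelSet u ⊆ labelSet (P.vert i) :=
    fun u hu => labelSet_subtree (P.offPath_subtree hi hu)
  have hsubyj1 : labelSet (Q.vert j) ⊆ labelSet (Q.vert 1) :=
    labelSet_subtree (Q.vert_subtree le_rfl hj0 hj)
  -- bound each of the three quantities by `rr (P.vert i) (Q.vert 1)` (≥ direction)
  have G1 : ∀ u ∈ P.offPath i, rr u (Q.vert j) ≤ rr (P.vert i) (Q.vert 1) := by
    intro u hu
    calc rr u (Q.vert j) ≤ rr u (Q.vert 1) :=
          rr_le_of_subtree_right homy1 ndy1 (Q.vert_subtree le_rfl hj0 hj)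
      _ ≤ rr (P.vert i) (Q.vert 1) :=
          rr_le_of_subtree_left homx ndx (P.offPath_subtree hi hu)
  have G2 : ∀ b, 1 ≤ b → b ≤ j - 1 → ∀ v ∈ Q.offPath b,
      rr (P.vert (i + 1)) v ≤ rr (P.vert i) (Q.vert 1) := by
    intro b hb1 hb2 v hv
    have hblen : b < Q.len := by omega
    calc rr (P.vert (i + 1)) v ≤ rr (P.vert (i + 1)) (Q.vert 1) :=
          rr_le_of_subtree_right homy1 ndy1
            (IsSubtree.trans' (Q.offPath_subtree hblen hv) (Q.vert_subtree le_rfl hb1 (by omega)))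
      _ ≤ rr (P.vert i) (Q.vert 1) :=
          rr_le_of_subtree_left homx ndx (children_subtree (P.step i hi₁ hi))
  apply le_antisymm
  · -- LHS ≤ RHS
    obtain ⟨s, hssub, hscard, hsiso⟩ := rr_spec (P.vert i) (Q.vert 1)
    rw [← hscard]
    have hsx : ∀ a ∈ s, a ∈ labelSet (P.vert i) :=
      fun a ha => (Finset.mem_inter.1 (hssub ha)).1
    have hsy1 : ∀ a ∈ s, a ∈ labelSet (Q.vert 1) :=
      fun a ha => (Finset.mem_inter.1 (hssub ha)).2
    by_cases hA : ∀ a ∈ s, a ∈ labelSet (P.vert (i + 1))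
    · -- Case: s is contained in the labels of x_{i+1}
      have hres : restrict (P.vert i) s = restrict (P.vert (i + 1)) s :=
        restrict_eq_of_subtree (children_subtree (P.step i hi₁ hi)) s homx ndx
          fun a ha _ => hA a ha
      rw [hres] at hsiso
      have hle : s.card ≤ rr (P.vert (i + 1)) (Q.vert 1) :=
        card_le_rr (fun a ha => Finset.mem_inter.2 ⟨hA a ha, hsy1 a ha⟩) hsiso
      exact le_trans hle (le_trans (le_max_left _ _) (le_max_right _ _))
    push_neg at hA
    obtain ⟨a0, ha0s, ha0x⟩ := hA
    obtain ⟨u0, hu0X, ha0u0⟩ : ∃ u ∈ P.offPath i, a0 ∈ labelSet u := by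
      rcases (P.mem_labelSet_vert_iff hS₁ hi₁ hi).1 (hsx a0 ha0s) with h | h
      · exact absurd h ha0x
      · exact h
    -- every element of s outside x_{i+1} lies below y_j
    have hkey : ∀ a ∈ s, a ∉ labelSet (P.vert (i + 1)) → a ∈ labelSet (Q.vert j) := by
      intro a ha hax
      obtain ⟨u, huX, hau⟩ : ∃ u ∈ P.offPath i, a ∈ labelSet u := by
        rcases (P.mem_labelSet_vert_iff hS₁ hi₁ hi).1 (hsx a ha) with h | h
        · exact absurd h hax
        · exact h
      rcases Q.mem_labelSet_path le_rfl hj0 hj hS₂ (hsy1 a ha) with h | ⟨b, hb1, hb2, v, hv, hav⟩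
      · exact h
      · exact absurd ⟨u, huX, v, hv, ⟨a, Finset.mem_inter.2 ⟨hau, hav⟩⟩⟩
          (hnon b hb1 (by omega))
    by_cases hB : ∀ a ∈ s, a ∈ labelSet (Q.vert j)
    · -- Case: s is contained in the labels of y_j
      have hres : restrict (Q.vert 1) s = restrict (Q.vert j) s :=
        restrict_eq_of_subtree (Q.vert_subtree le_rfl hj0 hj) s homy1 ndy1
          fun a ha _ => hB a ha
      rw [hres] at hsiso
      exact le_trans
        (card_le_rr (fun a ha => Finset.mem_inter.2 ⟨hsx a ha, hB a ha⟩) hsiso)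
        (le_max_left _ _)
    push_neg at hB
    obtain ⟨c0, hc0s, hc0yj⟩ := hB
    -- minimal level b0 < j whose off-path subtrees meet s
    have hexP : ∃ b, 1 ≤ b ∧ b < j ∧ ∃ v ∈ Q.offPath b, ∃ a ∈ s, a ∈ labelSet v := by
      rcases Q.mem_labelSet_path le_rfl hj0 hj hS₂ (hsy1 c0 hc0s) with h | ⟨b, hb1, hb2, v, hv, hcv⟩
      · exact absurd h hc0yj
      · exact ⟨b, hb1, hb2, v, hv, c0, hc0s, hcv⟩
    classical
    obtain ⟨hb0P, hb0min⟩ : (1 ≤ Nat.find hexP ∧ Nat.find hexP < j ∧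
        ∃ v ∈ Q.offPath (Nat.find hexP), ∃ a ∈ s, a ∈ labelSet v) ∧
        ∀ b < Nat.find hexP, ¬(1 ≤ b ∧ b < j ∧ ∃ v ∈ Q.offPath b, ∃ a ∈ s, a ∈ labelSet v) :=
      ⟨Nat.find_spec hexP, fun b hb => Nat.find_min hexP hb⟩
    set b0 := Nat.find hexP with hb0def
    obtain ⟨hb01, hb0j, vw, hvwY, aw, haws, havw⟩ := hb0P
    have hb0len : b0 < Q.len := by omega
    have hb01len : b0 + 1 ≤ Q.len := by omega
    have homyb01 : Homeo (Q.vert (b0 + 1)) := Q.vert_homeo hS₂ (by omega) hb01len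
    have ndyb01 : (labelList (Q.vert (b0 + 1))).Nodup := Q.vert_nodup hS₂ (by omega) hb01len
    have hsubjb01 : labelSet (Q.vert j) ⊆ labelSet (Q.vert (b0 + 1)) :=
      labelSet_subtree (Q.vert_subtree (by omega) (by omega) hj)
    -- descend on the Q side to level b0
    have hsy_b0 : ∀ a ∈ s, a ∈ labelSet (Q.vert b0) := by
      intro a ha
      rcases Q.mem_labelSet_path le_rfl hb01 (by omega) hS₂ (hsy1 a ha) with h | ⟨b, hb1, hb2, v, hv, hav⟩
      · exact h
      · exact absurd ⟨hb1, by omega, v, hv, a, ha, hav⟩ (hb0min b hb2)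
    have hry1b0 : restrict (Q.vert 1) s = restrict (Q.vert b0) s :=
      restrict_eq_of_subtree (Q.vert_subtree le_rfl hb01 (by omega)) s homy1 ndy1
        fun a ha _ => hsy_b0 a ha
    -- node structure of the P side
    obtain ⟨tsx, htsx⟩ := P.no_leaf i hi₁ hilen
    have hchx : (P.vert i).children = tsx := by rw [htsx]; rfl
    have hx'mem : P.vert (i + 1) ∈ tsx := by
      have := P.step i hi₁ hi; rwa [hchx] at this
    have hu0mem : u0 ∈ tsx := by
      have := ((P.mem_offPath_iff hi).1 hu0X).1; rwa [hchx] at this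
    have hne0 : u0 ≠ P.vert (i + 1) := ((P.mem_offPath_iff hi).1 hu0X).2
    have hc0x' : c0 ∈ labelSet (P.vert (i + 1)) := by
      by_contra h
      exact hc0yj (hkey c0 hc0s h)
    obtain ⟨cu, hcu⟩ : ∃ cu, restrict u0 s = some cu := by
      rcases h : restrict u0 s with _ | cu
      · exact absurd h (restrict_ne_none ha0u0 ha0s)
      · exact ⟨cu, rfl⟩
    obtain ⟨cx, hcx⟩ : ∃ cx, restrict (P.vert (i + 1)) s = some cx := by
      rcases h : restrict (P.vert (i + 1)) s with _ | cx
      · exact absurd h (restrict_ne_none hc0x' hc0s)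
      · exact ⟨cx, rfl⟩
    have h2lex : 2 ≤ (tsx.filterMap (fun t => restrict t s)).length :=
      two_le_length_filterMap hu0mem hx'mem hne0 hcu hcx
    have hrsx : restrict (P.vert i) s =
        some (node (tsx.filterMap (fun t => restrict t s))) := by
      rw [htsx, restrict_node]
      exact nodeOf_of_two_le h2lex
    -- node structure of the Q side at level b0
    obtain ⟨tsy, htsy⟩ := Q.no_leaf b0 hb01 (by omega)
    have hchy : (Q.vert b0).children = tsy := by rw [htsy]; rfl
    have hyb1mem : Q.vert (b0 + 1) ∈ tsy := by
      have := Q.step b0 hb01 hb0len; rwa [hchy] at this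
    have hvwmem : vw ∈ tsy := by
      have := ((Q.mem_offPath_iff hb0len).1 hvwY).1; rwa [hchy] at this
    have hnevw : vw ≠ Q.vert (b0 + 1) := ((Q.mem_offPath_iff hb0len).1 hvwY).2
    have ha0yb01 : a0 ∈ labelSet (Q.vert (b0 + 1)) := hsubjb01 (hkey a0 ha0s ha0x)
    obtain ⟨cw, hcw⟩ : ∃ cw, restrict vw s = some cw := by
      rcases h : restrict vw s with _ | cw
      · exact absurd h (restrict_ne_none havw haws)
      · exact ⟨cw, rfl⟩
    obtain ⟨cy, hcy⟩ : ∃ cy, restrict (Q.vert (b0 + 1)) s = some cy := by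
      rcases h : restrict (Q.vert (b0 + 1)) s with _ | cy
      · exact absurd h (restrict_ne_none ha0yb01 ha0s)
      · exact ⟨cy, rfl⟩
    have h2ley : 2 ≤ (tsy.filterMap (fun t => restrict t s)).length :=
      two_le_length_filterMap hvwmem hyb1mem hnevw hcw hcy
    have hrsy : restrict (Q.vert b0) s =
        some (node (tsy.filterMap (fun t => restrict t s))) := by
      rw [htsy, restrict_node]
      exact nodeOf_of_two_le h2ley
    rw [hrsx, hry1b0, hrsy] at hsiso
    have hiso' : Iso (node (tsx.filterMap (fun t => restrict t s)))
        (node (tsy.filterMap (fun t => restrict t s))) := hsiso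
    -- the child coming from u0 must map to the path child y_{b0+1}
    have hcu_mem : cu ∈ tsx.filterMap (fun t => restrict t s) :=
      List.mem_filterMap.2 ⟨u0, hu0mem, hcu⟩
    obtain ⟨d, hd_qs, hIsoCu⟩ := iso_children hiso' cu hcu_mem
    obtain ⟨w, hw_tsy, hw_res⟩ := List.mem_filterMap.1 hd_qs
    have hlab_cu : labelSet cu = labelSet u0 ∩ s := labelSet_restrict hcu
    have hlab_d : labelSet d = labelSet w ∩ s := labelSet_restrict hw_res
    have hlabeq : labelSet u0 ∩ s = labelSet w ∩ s := by
      rw [← hlab_cu, ← hlab_d, iso_labelSet hIsoCu]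
    have hw_eq : w = Q.vert (b0 + 1) := by
      by_contra hne
      have hwY : w ∈ Q.offPath b0 :=
        (Q.mem_offPath_iff hb0len).2 ⟨by rw [hchy]; exact hw_tsy, hne⟩
      have ha0w : a0 ∈ labelSet w := by
        have : a0 ∈ labelSet u0 ∩ s := Finset.mem_inter.2 ⟨ha0u0, ha0s⟩
        rw [hlabeq] at this
        exact (Finset.mem_inter.1 this).1
      exact hnon b0 hb01 (by omega)
        ⟨u0, hu0X, w, hwY, ⟨a0, Finset.mem_inter.2 ⟨ha0u0, ha0w⟩⟩⟩
    subst hw_eq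
    -- the child coming from x_{i+1} maps to some off-path child w' of y_{b0}
    have hcx_mem : cx ∈ tsx.filterMap (fun t => restrict t s) :=
      List.mem_filterMap.2 ⟨P.vert (i + 1), hx'mem, hcx⟩
    obtain ⟨d', hd'_qs, hIsoCx⟩ := iso_children hiso' cx hcx_mem
    obtain ⟨w', hw'_tsy, hw'_res⟩ := List.mem_filterMap.1 hd'_qs
    have hlabeq' : labelSet (P.vert (i + 1)) ∩ s = labelSet w' ∩ s := by
      rw [← labelSet_restrict hcx, ← labelSet_restrict hw'_res, iso_labelSet hIsoCx]
    have hw'_ne : w' ≠ Q.vert (b0 + 1) := by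
      intro he
      subst he
      have : a0 ∈ labelSet (P.vert (i + 1)) ∩ s := by
        rw [hlabeq', ← hlabeq]
        exact Finset.mem_inter.2 ⟨ha0u0, ha0s⟩
      exact ha0x (Finset.mem_inter.1 this).1
    have hw'Y : w' ∈ Q.offPath b0 :=
      (Q.mem_offPath_iff hb0len).2 ⟨by rw [hchy]; exact hw'_tsy, hw'_ne⟩
    -- s splits into the part below y_{b0+1} and the part below w'
    have hpart : ∀ a ∈ s, a ∈ labelSet (Q.vert (b0 + 1)) ∨ a ∈ labelSet w' := by
      intro a ha
      rcases (Q.mem_labelSet_vert_iff hS₂ hb01 hb0len).1 (hsy_b0 a ha) with h | ⟨v, hvY, hav⟩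
      · exact Or.inl h
      by_cases hvw' : v = w'
      · exact Or.inr (hvw' ▸ hav)
      exfalso
      obtain ⟨cv, hcv⟩ : ∃ cv, restrict v s = some cv := by
        rcases h : restrict v s with _ | cv
        · exact absurd h (restrict_ne_none hav ha)
        · exact ⟨cv, rfl⟩
      have hcv_mem : cv ∈ tsy.filterMap (fun t => restrict t s) := by
        refine List.mem_filterMap.2 ⟨v, ?_, hcv⟩
        have := ((Q.mem_offPath_iff hb0len).1 hvY).1
        rwa [hchy] at this
      obtain ⟨c, hc_rs, hIsoCv⟩ := iso_children (iso_symm hiso') cv hcv_mem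
      obtain ⟨z, hz_tsx, hz_res⟩ := List.mem_filterMap.1 hc_rs
      have hlabeq'' : labelSet v ∩ s = labelSet z ∩ s := by
        rw [← labelSet_restrict hcv, ← labelSet_restrict hz_res, iso_labelSet hIsoCv]
      by_cases hzx : z = P.vert (i + 1)
      · -- then labels v ∩ s = labels x' ∩ s = labels w' ∩ s, contradiction with v ≠ w'
        have : labelSet v ∩ s = labelSet w' ∩ s := by
          rw [hlabeq'', hzx, hlabeq']
        have haw' : a ∈ labelSet w' := by
          have h1 : a ∈ labelSet v ∩ s := Finset.mem_inter.2 ⟨hav, ha⟩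
          rw [this] at h1
          exact (Finset.mem_inter.1 h1).1
        exact hdisQQ b0 hb01 hb0len v hvY w' hw'Y hvw' a hav haw'
      · have hzX : z ∈ P.offPath i :=
          (P.mem_offPath_iff hi).2 ⟨by rw [hchx]; exact hz_tsx, hzx⟩
        have haz : a ∈ labelSet z := by
          have h1 : a ∈ labelSet v ∩ s := Finset.mem_inter.2 ⟨hav, ha⟩
          rw [hlabeq''] at h1
          exact (Finset.mem_inter.1 h1).1
        exact hnon b0 hb01 (by omega)
          ⟨z, hzX, v, hvY, ⟨a, Finset.mem_inter.2 ⟨haz, hav⟩⟩⟩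
    -- split s
    have hdisAC : ∀ a, a ∈ labelSet w' → a ∉ labelSet (Q.vert (b0 + 1)) :=
      fun a ha => hdisQ b0 hb01 hb0len w' hw'Y a ha
    have hsplit : s = (s ∩ labelSet (Q.vert (b0 + 1))) ∪ (s ∩ labelSet w') := by
      ext a
      simp only [Finset.mem_union, Finset.mem_inter]
      constructor
      · intro ha
        rcases hpart a ha with h | h
        · exact Or.inl ⟨ha, h⟩
        · exact Or.inr ⟨ha, h⟩
      · rintro (⟨ha, _⟩ | ⟨ha, _⟩) <;> exact ha
    have hdisjAC : Disjoint (s ∩ labelSet (Q.vert (b0 + 1))) (s ∩ labelSet w') := by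
      rw [Finset.disjoint_left]
      intro a ha ha'
      exact hdisAC a (Finset.mem_inter.1 ha').2 (Finset.mem_inter.1 ha).2
    have hcardsplit : s.card =
        (s ∩ labelSet (Q.vert (b0 + 1))).card + (s ∩ labelSet w').card := by
      conv_lhs => rw [hsplit]
      exact Finset.card_union_of_disjoint hdisjAC
    -- first part is an agreement set for (u0, y_j)
    have hAeq : s ∩ labelSet (Q.vert (b0 + 1)) = labelSet u0 ∩ s := by
      rw [hlabeq, Finset.inter_comm]
    have hsubA : ∀ a ∈ s ∩ labelSet (Q.vert (b0 + 1)), a ∈ labelSet u0 ∧ a ∈ labelSet (Q.vert j) := by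
      intro a ha
      have hau : a ∈ labelSet u0 := by
        rw [hAeq] at ha
        exact (Finset.mem_inter.1 ha).1
      have has : a ∈ s := (Finset.mem_inter.1 ha).1
      refine ⟨hau, hkey a has fun hax => ?_⟩
      exact hdisP u0 hu0X a hau hax
    have hrA1 : restrict u0 (s ∩ labelSet (Q.vert (b0 + 1))) = some d ∧
        restrict (Q.vert j) (s ∩ labelSet (Q.vert (b0 + 1))) = some d → True := fun _ => trivial
    have hresA1 : restrict u0 (s ∩ labelSet (Q.vert (b0 + 1))) = restrict u0 s := by
      refine restrict_congr fun a ha => ?_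
      constructor
      · intro h
        exact (Finset.mem_inter.1 h).1
      · intro h
        rw [hAeq]
        exact Finset.mem_inter.2 ⟨ha, h⟩
    have hresA2 : restrict (Q.vert j) (s ∩ labelSet (Q.vert (b0 + 1))) = some d := by
      have e1 : restrict (Q.vert (b0 + 1)) (s ∩ labelSet (Q.vert (b0 + 1))) =
          restrict (Q.vert (b0 + 1)) s := by
        refine restrict_congr fun a ha => ?_
        constructor
        · intro h
          exact (Finset.mem_inter.1 h).1
        · intro h
          exact Finset.mem_inter.2 ⟨h, ha⟩
      have e2 : restrict (Q.vert (b0 + 1)) (s ∩ labelSet (Q.vert (b0 + 1))) =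
          restrict (Q.vert j) (s ∩ labelSet (Q.vert (b0 + 1))) := by
        refine restrict_eq_of_subtree (Q.vert_subtree (by omega) (by omega) hj) _
          homyb01 ndyb01 fun a ha _ => ?_
        exact (hsubA a ha).2
      rw [← e2, e1, hw_res]
    have hcardA : (s ∩ labelSet (Q.vert (b0 + 1))).card ≤ mm (P.offPath i) {Q.vert j} := by
      refine le_trans (card_le_rr (fun a ha => Finset.mem_inter.2 (hsubA a ha)) ?_)
        (rr_le_mm_single hu0X)
      rw [hresA1, hcu, hresA2]
      exact hIsoCu
    -- second part is an agreement set for (x_{i+1}, w')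
    have hsubC : ∀ a ∈ s ∩ labelSet w', a ∈ labelSet (P.vert (i + 1)) ∧ a ∈ labelSet w' := by
      intro a ha
      obtain ⟨has, haw⟩ := Finset.mem_inter.1 ha
      refine ⟨?_, haw⟩
      have : a ∈ labelSet w' ∩ s := Finset.mem_inter.2 ⟨haw, has⟩
      rw [← hlabeq'] at this
      exact (Finset.mem_inter.1 this).1
    have hresC1 : restrict (P.vert (i + 1)) (s ∩ labelSet w') = some cx := by
      rw [← hcx]
      refine restrict_congr fun a ha => ?_
      constructor
      · intro h
        exact (Finset.mem_inter.1 h).1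
      · intro h
        have h2 : a ∈ labelSet (P.vert (i + 1)) ∩ s := Finset.mem_inter.2 ⟨ha, h⟩
        rw [hlabeq'] at h2
        exact Finset.mem_inter.2 ⟨h, (Finset.mem_inter.1 h2).1⟩
    have hresC2 : restrict w' (s ∩ labelSet w') = some d' := by
      rw [← hw'_res]
      refine restrict_congr fun a ha => ?_
      constructor
      · intro h
        exact (Finset.mem_inter.1 h).1
      · intro h
        exact Finset.mem_inter.2 ⟨h, ha⟩
    have hcardC : (s ∩ labelSet w').card ≤
        (Finset.Icc 1 (j - 1)).sup (fun b => mm {P.vert (i + 1)} (Q.offPath b)) := by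
      have h1 : (s ∩ labelSet w').card ≤ rr (P.vert (i + 1)) w' := by
        refine card_le_rr (fun a ha => Finset.mem_inter.2 (hsubC a ha)) ?_
        rw [hresC1, hresC2]
        exact hIsoCx
      have h2 : rr (P.vert (i + 1)) w' ≤ mm {P.vert (i + 1)} (Q.offPath b0) :=
        rr_le_mm_single' hw'Y
      have h3 : mm {P.vert (i + 1)} (Q.offPath b0) ≤
          (Finset.Icc 1 (j - 1)).sup (fun b => mm {P.vert (i + 1)} (Q.offPath b)) :=
        Finset.le_sup (f := fun b => mm {P.vert (i + 1)} (Q.offPath b))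
          (Finset.mem_Icc.2 ⟨hb01, by omega⟩)
      omega
    calc s.card = (s ∩ labelSet (Q.vert (b0 + 1))).card + (s ∩ labelSet w').card := hcardsplit
      _ ≤ mm (P.offPath i) {Q.vert j} +
          (Finset.Icc 1 (j - 1)).sup (fun b => mm {P.vert (i + 1)} (Q.offPath b)) := by
        exact Nat.add_le_add hcardA hcardC
      _ ≤ _ := le_trans (le_max_right _ _) (le_max_right _ _)
  · -- RHS ≤ LHS
    refine max_le ?_ (max_le ?_ ?_)
    · exact rr_le_of_subtree_right homy1 ndy1 (Q.vert_subtree le_rfl hj0 hj)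
    · exact rr_le_of_subtree_left homx ndx (children_subtree (P.step i hi₁ hi))
    · -- the matching term
      set m1 := mm (P.offPath i) {Q.vert j} with hm1def
      set m2 := (Finset.Icc 1 (j - 1)).sup (fun b => mm {P.vert (i + 1)} (Q.offPath b)) with hm2def
      rcases Nat.eq_zero_or_pos m1 with hm1 | hm1
      · rw [hm1, zero_add]
        refine Finset.sup_le ?_
        intro b hb
        rw [Finset.mem_Icc] at hb
        exact mm_single_le' fun v hv => G2 b hb.1 hb.2 v hv
      rcases Nat.eq_zero_or_pos m2 with hm2 | hm2
      · rw [hm2, add_zero]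
        exact mm_single_le fun u hu => G1 u hu
      -- both positive: build a combined agreement set
      have hXne : (P.offPath i).Nonempty := by
        rcases Finset.eq_empty_or_nonempty (P.offPath i) with he | h
        · exfalso
          have : m1 ≤ 0 := mm_single_le (fun u hu => by rw [he] at hu; simp at hu)
          omega
        · exact h
      obtain ⟨u0, hu0X, hu0sup⟩ :=
        Finset.exists_mem_eq_sup (P.offPath i) hXne (fun u => rr u (Q.vert j))
      have hEq1 : rr u0 (Q.vert j) = m1 := by
        refine le_antisymm (rr_le_mm_single hu0X) ?_
        have h1 : m1 ≤ (P.offPath i).sup (fun u => rr u (Q.vert j)) :=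
          mm_single_le fun u hu => Finset.le_sup (f := fun u => rr u (Q.vert j)) hu
        rw [hu0sup] at h1
        exact h1
      have hIccne : (Finset.Icc 1 (j - 1)).Nonempty := ⟨1, by rw [Finset.mem_Icc]; omega⟩
      obtain ⟨b0, hb0Icc, hb0sup⟩ :=
        Finset.exists_mem_eq_sup (Finset.Icc 1 (j - 1)) hIccne
          (fun b => mm {P.vert (i + 1)} (Q.offPath b))
      rw [Finset.mem_Icc] at hb0Icc
      have hm2eq : m2 = mm {P.vert (i + 1)} (Q.offPath b0) := hm2def.trans hb0sup
      have hb01 : 1 ≤ b0 := hb0Icc.1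
      have hb0j : b0 ≤ j - 1 := hb0Icc.2
      have hb0len : b0 < Q.len := by omega
      have hb01len : b0 + 1 ≤ Q.len := by omega
      have hYne : (Q.offPath b0).Nonempty := by
        rcases Finset.eq_empty_or_nonempty (Q.offPath b0) with he | h
        · exfalso
          have : m2 ≤ 0 := by
            rw [hm2eq]
            exact mm_single_le' (fun v hv => by rw [he] at hv; simp at hv)
          omega
        · exact h
      obtain ⟨v0, hv0Y, hv0sup⟩ :=
        Finset.exists_mem_eq_sup (Q.offPath b0) hYne (fun v => rr (P.vert (i + 1)) v)
      have hEq2 : rr (P.vert (i + 1)) v0 = m2 := by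
        refine le_antisymm (le_trans (rr_le_mm_single' hv0Y) (le_of_eq hm2eq.symm)) ?_
        rw [hm2eq]
        have h1 : mm {P.vert (i + 1)} (Q.offPath b0) ≤
            (Q.offPath b0).sup (fun v => rr (P.vert (i + 1)) v) :=
          mm_single_le' fun v hv => Finset.le_sup (f := fun v => rr (P.vert (i + 1)) v) hv
        rw [hv0sup] at h1
        exact h1
      -- agreement sets
      obtain ⟨s1, hs1sub, hs1card, hs1iso⟩ := rr_spec u0 (Q.vert j)
      obtain ⟨s2, hs2sub, hs2card, hs2iso⟩ := rr_spec (P.vert (i + 1)) v0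
      rw [hEq1] at hs1card
      rw [hEq2] at hs2card
      have hs1u : ∀ a ∈ s1, a ∈ labelSet u0 :=
        fun a ha => (Finset.mem_inter.1 (hs1sub ha)).1
      have hs1y : ∀ a ∈ s1, a ∈ labelSet (Q.vert j) :=
        fun a ha => (Finset.mem_inter.1 (hs1sub ha)).2
      have hs2x : ∀ a ∈ s2, a ∈ labelSet (P.vert (i + 1)) :=
        fun a ha => (Finset.mem_inter.1 (hs2sub ha)).1
      have hs2v : ∀ a ∈ s2, a ∈ labelSet v0 :=
        fun a ha => (Finset.mem_inter.1 (hs2sub ha)).2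
      have hs1ne : s1.Nonempty := Finset.card_pos.1 (by omega)
      have hs2ne : s2.Nonempty := Finset.card_pos.1 (by omega)
      obtain ⟨T1, hT1⟩ : ∃ T1, restrict u0 s1 = some T1 := by
        obtain ⟨a, ha⟩ := hs1ne
        rcases h : restrict u0 s1 with _ | T1
        · exact absurd h (restrict_ne_none (hs1u a ha) ha)
        · exact ⟨T1, rfl⟩
      obtain ⟨T1', hT1'⟩ : ∃ T1', restrict (Q.vert j) s1 = some T1' := by
        obtain ⟨a, ha⟩ := hs1ne
        rcases h : restrict (Q.vert j) s1 with _ | T1'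
        · exact absurd h (restrict_ne_none (hs1y a ha) ha)
        · exact ⟨T1', rfl⟩
      obtain ⟨T2, hT2⟩ : ∃ T2, restrict (P.vert (i + 1)) s2 = some T2 := by
        obtain ⟨a, ha⟩ := hs2ne
        rcases h : restrict (P.vert (i + 1)) s2 with _ | T2
        · exact absurd h (restrict_ne_none (hs2x a ha) ha)
        · exact ⟨T2, rfl⟩
      obtain ⟨T2', hT2'⟩ : ∃ T2', restrict v0 s2 = some T2' := by
        obtain ⟨a, ha⟩ := hs2ne
        rcases h : restrict v0 s2 with _ | T2'
        · exact absurd h (restrict_ne_none (hs2v a ha) ha)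
        · exact ⟨T2', rfl⟩
      have hIso1 : Iso T1 T1' := by
        rw [hT1, hT1'] at hs1iso
        exact hs1iso
      have hIso2 : Iso T2 T2' := by
        rw [hT2, hT2'] at hs2iso
        exact hs2iso
      -- disjointness of s1 and s2
      have hdis12 : ∀ a ∈ s1, a ∉ s2 := by
        intro a ha ha2
        exact hdisP u0 hu0X a (hs1u a ha) (hs2x a ha2)
      have hdisj : Disjoint s1 s2 := Finset.disjoint_left.2 hdis12
      have hcards : (s1 ∪ s2).card = m1 + m2 := by
        rw [Finset.card_union_of_disjoint hdisj, hs1card, hs2card]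
      -- restrict computations on the P side
      have hru0 : restrict u0 (s1 ∪ s2) = restrict u0 s1 := by
        refine restrict_congr fun a ha => ?_
        rw [Finset.mem_union]
        constructor
        · rintro (h | h)
          · exact h
          · exact absurd (hs2x a h) (hdisP u0 hu0X a ha)
        · exact Or.inl
      have hrx' : restrict (P.vert (i + 1)) (s1 ∪ s2) = restrict (P.vert (i + 1)) s2 := by
        refine restrict_congr fun a ha => ?_
        rw [Finset.mem_union]
        constructor
        · rintro (h | h)
          · exact absurd ha (hdisP u0 hu0X a (hs1u a h))
          · exact h
        · exact Or.inr
      -- the P side restricts to a two-child node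
      obtain ⟨tsx, htsx⟩ := P.no_leaf i hi₁ hilen
      have hchx : (P.vert i).children = tsx := by rw [htsx]; rfl
      have hx'mem : P.vert (i + 1) ∈ tsx := by
        have := P.step i hi₁ hi; rwa [hchx] at this
      have hu0mem : u0 ∈ tsx := by
        have := ((P.mem_offPath_iff hi).1 hu0X).1; rwa [hchx] at this
      have hne0 : u0 ≠ P.vert (i + 1) := ((P.mem_offPath_iff hi).1 hu0X).2
      have hndts : tsx.Nodup := by
        have := P.children_nodup_vert hS₁ hi₁ hilen; rwa [hchx] at this
      have hothers : ∀ w ∈ tsx, w ≠ u0 → w ≠ P.vert (i + 1) →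
          restrict w (s1 ∪ s2) = none := by
        intro w hw hwu hwx
        rw [restrict_eq_none_iff]
        intro a haw has
        have hwX : w ∈ P.offPath i := (P.mem_offPath_iff hi).2 ⟨by rw [hchx]; exact hw, hwx⟩
        rcases Finset.mem_union.1 has with h | h
        · exact hdisPP w hwX u0 hu0X hwu a haw (hs1u a h)
        · exact hdisP w hwX a haw (hs2x a h)
      have hfmx := filterMap_eq_pair (f := fun t => restrict t (s1 ∪ s2)) hu0mem hx'mem hne0
        hndts hothers (hru0.trans hT1) (hrx'.trans hT2)
      have hPside : restrict (P.vert i) (s1 ∪ s2) = some (node [T1, T2]) ∨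
          restrict (P.vert i) (s1 ∪ s2) = some (node [T2, T1]) := by
        rw [htsx, restrict_node]
        rcases hfmx with h | h
        · left; rw [h]; exact nodeOf_pair
        · right; rw [h]; exact nodeOf_pair
      -- the Q side restricts to a two-child node
      have homyb01 : Homeo (Q.vert (b0 + 1)) := Q.vert_homeo hS₂ (by omega) hb01len
      have ndyb01 : (labelList (Q.vert (b0 + 1))).Nodup := Q.vert_nodup hS₂ (by omega) hb01len
      have hsubjb01 : labelSet (Q.vert j) ⊆ labelSet (Q.vert (b0 + 1)) :=
        labelSet_subtree (Q.vert_subtree (by omega) (by omega) hj)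
      have hry1 : restrict (Q.vert 1) (s1 ∪ s2) = restrict (Q.vert b0) (s1 ∪ s2) := by
        refine restrict_eq_of_subtree (Q.vert_subtree le_rfl hb01 (le_of_lt hb0len)) _
          homy1 ndy1 fun a ha _ => ?_
        rcases Finset.mem_union.1 ha with h | h
        · exact labelSet_subtree (Q.vert_subtree hb01 (by omega) hj) (hs1y a h)
        · exact labelSet_subtree (Q.offPath_subtree hb0len hv0Y) (hs2v a h)
      have hrv0 : restrict v0 (s1 ∪ s2) = restrict v0 s2 := by
        refine restrict_congr fun a ha => ?_
        rw [Finset.mem_union]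
        constructor
        · rintro (h | h)
          · exact absurd (hsubjb01 (hs1y a h)) (hdisQ b0 hb01 hb0len v0 hv0Y a ha)
          · exact h
        · exact Or.inr
      have hryb01 : restrict (Q.vert (b0 + 1)) (s1 ∪ s2) = restrict (Q.vert j) s1 := by
        have step1 : restrict (Q.vert (b0 + 1)) (s1 ∪ s2) = restrict (Q.vert (b0 + 1)) s1 := by
          refine restrict_congr fun a ha => ?_
          rw [Finset.mem_union]
          constructor
          · rintro (h | h)
            · exact h
            · exact absurd ha (hdisQ b0 hb01 hb0len v0 hv0Y a (hs2v a h))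
          · exact Or.inl
        rw [step1]
        exact restrict_eq_of_subtree (Q.vert_subtree (by omega) (by omega) hj) s1
          homyb01 ndyb01 fun a ha _ => hs1y a ha
      obtain ⟨tsy, htsy⟩ := Q.no_leaf b0 hb01 (le_of_lt hb0len)
      have hchy : (Q.vert b0).children = tsy := by rw [htsy]; rfl
      have hyb1mem : Q.vert (b0 + 1) ∈ tsy := by
        have := Q.step b0 hb01 hb0len; rwa [hchy] at this
      have hv0mem : v0 ∈ tsy := by
        have := ((Q.mem_offPath_iff hb0len).1 hv0Y).1; rwa [hchy] at this
      have hne2 : v0 ≠ Q.vert (b0 + 1) := ((Q.mem_offPath_iff hb0len).1 hv0Y).2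
      have hndtsy : tsy.Nodup := by
        have := Q.children_nodup_vert hS₂ hb01 (le_of_lt hb0len); rwa [hchy] at this
      have hothersy : ∀ w ∈ tsy, w ≠ v0 → w ≠ Q.vert (b0 + 1) →
          restrict w (s1 ∪ s2) = none := by
        intro w hw hwv hwy
        rw [restrict_eq_none_iff]
        intro a haw has
        have hwY : w ∈ Q.offPath b0 := (Q.mem_offPath_iff hb0len).2 ⟨by rw [hchy]; exact hw, hwy⟩
        rcases Finset.mem_union.1 has with h | h
        · exact hdisQ b0 hb01 hb0len w hwY a haw (hsubjb01 (hs1y a h))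
        · exact hdisQQ b0 hb01 hb0len w hwY v0 hv0Y hwv a haw (hs2v a h)
      have hfmy := filterMap_eq_pair (f := fun t => restrict t (s1 ∪ s2)) hv0mem hyb1mem hne2
        hndtsy hothersy (hrv0.trans hT2') (hryb01.trans hT1')
      have hQside : restrict (Q.vert 1) (s1 ∪ s2) = some (node [T2', T1']) ∨
          restrict (Q.vert 1) (s1 ∪ s2) = some (node [T1', T2']) := by
        rw [hry1, htsy, restrict_node]
        rcases hfmy with h | h
        · left; rw [h]; exact nodeOf_pair
        · right; rw [h]; exact nodeOf_pair
      -- conclude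
      refine le_trans (le_of_eq hcards.symm) (card_le_rr ?_ ?_)
      · intro a ha
        rw [Finset.mem_inter]
        rcases Finset.mem_union.1 ha with h | h
        · exact ⟨hsubXx u0 hu0X (hs1u a h), hsubyj1 (hs1y a h)⟩
        · refine ⟨hsubx' (hs2x a h), ?_⟩
          exact labelSet_subtree (IsSubtree.trans'
            (Q.offPath_subtree hb0len hv0Y) (Q.vert_subtree le_rfl hb01 (by omega))) (hs2v a h)
      · rcases hPside with h | h <;> rcases hQside with h' | h' <;> rw [h, h']
        · exact iso_pair_swap hIso1 hIso2
        · exact iso_pair hIso1 hIso2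
        · exact iso_pair hIso2 hIso1
        · exact iso_pair_swap hIso2 hIso1
open ETree in
/-- In the root-path setting, let `i < p'` and `1 < j ≤ q'` be indices
such that the pair `(xᵢ, Q[1,j−1])` is nonintersecting.  Then
`rr(S₁^{xᵢ},S₂^{y₁}) = max { rr(S₁^{xᵢ},S₂^{y_j}), rr(S₁^{x_{i+1}},S₂^{y₁}),
mm(Xᵢ,y_j) + max_{j'∈[1,j−1]} mm(x_{i+1},Y_{j'}) }`. -/
theorem rr_recurrence_G {L : Type} [DecidableEq L] (P Q : RootPath L)
    (hS₁ : ETree.IsEvolutionary P.tree) (hS₂ : ETree.IsEvolutionary Q.tree)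
    (hlab : ETree.labelSet P.tree = ETree.labelSet Q.tree)
    (i j : ℕ) (hi₁ : 1 ≤ i) (hi : i < P.len) (hj₁ : 1 < j) (hj : j ≤ Q.len)
    (hnon : ∀ b, 1 ≤ b → b ≤ j - 1 → ¬ Intersecting P Q i b) :
    rr (P.vert i) (Q.vert 1) =
      max (rr (P.vert i) (Q.vert j))
      (max (rr (P.vert (i + 1)) (Q.vert 1))
           (mm (P.offPath i) {Q.vert j} +
            (Finset.Icc 1 (j - 1)).sup (fun b => mm {P.vert (i + 1)} (Q.offPath b)))) := by
  exact rr_recurrence_G' P Q hS₁ hS₂ hlab i j hi₁ hi hj₁ hj hnon
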